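/- (Residual norm of the Gl-QGMRES iterate.) Let A ∈ ℍ^{n×n}, B, X₀ ∈ ℍ^{n×m}, R₀ := B − A X₀, β := ‖R₀‖ > 0, V₁ := R₀ β^{-1}, and assume the Arnoldi hypotheses through step k; let H̄_k ∈ ℍ^{(k+1)×k} be the matrix with entries h_{i,j} (set to 0 for i > j+1). Suppose Q ∈ ℍ^{(k+1)×(k+1)} satisfies Q^* Q = I and Q H̄_k = [R̃; 0], where R̃ ∈ ℍ^{k×k} is upper triangular with nonzero diagonal entries. Denote by q ∈ ℍ^{k+1} the first column of Q. If y ∈ ℍ^k satisfies R̃ y = β q(1:k) (the first k components of β q), then the Gl-QGMRES iterate X_k := X₀ + Σ_{j=1}^k V_j y_j satisfies ‖B − A X_k‖ = β |q_{k+1}|, where q_{k+1} is the last component of q; moreover this value is the minimum of ‖B − A(X₀ + Σ_j V_j z_j)‖ over all z ∈ ℍ^k. -/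

import Mathlib

open Matrix Quaternion

noncomputable section

/-- Entrywise right scalar multiple of a quaternion matrix. -/
def qsmul {n m : ℕ} (X : Matrix (Fin n) (Fin m) ℍ[ℝ]) (a : ℍ[ℝ]) :
    Matrix (Fin n) (Fin m) ℍ[ℝ] := fun i j => X i j * a

/-- Frobenius norm of a quaternion matrix: `‖X‖ = (Re tr(X^* X))^{1/2}`. -/
def qnorm {n m : ℕ} (X : Matrix (Fin n) (Fin m) ℍ[ℝ]) : ℝ :=
  Real.sqrt (Matrix.trace (Xᴴ * X)).re

/-- The Arnoldi hypotheses through step `k`. -/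
structure ArnoldiData (n m k : ℕ) (A : Matrix (Fin n) (Fin n) ℍ[ℝ])
    (V : ℕ → Matrix (Fin n) (Fin m) ℍ[ℝ]) (h : ℕ → ℕ → ℍ[ℝ]) : Prop where
  normV1 : qnorm (V 1) = 1
  hdef : ∀ j ∈ Finset.Icc 1 k, ∀ i ∈ Finset.Icc 1 j,
      h i j = Matrix.trace ((V i)ᴴ * (A * V j))
  hsub : ∀ j ∈ Finset.Icc 1 k,
      h (j+1) j = (qnorm (A * V j - ∑ i ∈ Finset.Icc 1 j, qsmul (V i) (h i j)) : ℍ[ℝ])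
  hsub_ne : ∀ j ∈ Finset.Icc 1 k, h (j+1) j ≠ 0
  vdef : ∀ j ∈ Finset.Icc 1 k,
      V (j+1) = qsmul (A * V j - ∑ i ∈ Finset.Icc 1 j, qsmul (V i) (h i j)) (h (j+1) j)⁻¹

variable {n m : ℕ}

lemma qsmul_qsmul (X : Matrix (Fin n) (Fin m) ℍ[ℝ]) (a b : ℍ[ℝ]) :
    qsmul (qsmul X a) b = qsmul X (a * b) := by
  funext i j; simp [qsmul, mul_assoc]

lemma qsmul_one (X : Matrix (Fin n) (Fin m) ℍ[ℝ]) : qsmul X 1 = X := by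
  funext i j; simp [qsmul]

lemma mul_qsmul (A : Matrix (Fin n) (Fin n) ℍ[ℝ]) (X : Matrix (Fin n) (Fin m) ℍ[ℝ]) (a : ℍ[ℝ]) :
    A * qsmul X a = qsmul (A * X) a := by
  funext i j; simp [qsmul, Matrix.mul_apply, Finset.sum_mul, mul_assoc]

lemma qsmul_sub_scalar (X : Matrix (Fin n) (Fin m) ℍ[ℝ]) (a b : ℍ[ℝ]) :
    qsmul X (a - b) = qsmul X a - qsmul X b := by
  funext i j; simp [qsmul, mul_sub]

lemma qsmul_sum_scalar {ι : Type*} (s : Finset ι) (X : Matrix (Fin n) (Fin m) ℍ[ℝ])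
    (f : ι → ℍ[ℝ]) : qsmul X (∑ i ∈ s, f i) = ∑ i ∈ s, qsmul X (f i) := by
  funext i j; simp [qsmul, Finset.mul_sum, Matrix.sum_apply]

lemma sum_qsmul {ι : Type*} (s : Finset ι) (X : ι → Matrix (Fin n) (Fin m) ℍ[ℝ])
    (a : ℍ[ℝ]) : qsmul (∑ i ∈ s, X i) a = ∑ i ∈ s, qsmul (X i) a := by
  funext i j; simp [qsmul, Finset.sum_mul, Matrix.sum_apply]

lemma trace_conjT_qsmul_qsmul (X Y : Matrix (Fin n) (Fin m) ℍ[ℝ]) (a b : ℍ[ℝ]) :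
    Matrix.trace ((qsmul X a)ᴴ * qsmul Y b) = star a * Matrix.trace (Xᴴ * Y) * b := by
  simp only [Matrix.trace, Matrix.diag, Matrix.mul_apply, Matrix.conjTranspose_apply, qsmul]
  rw [Finset.mul_sum, Finset.sum_mul]
  refine Finset.sum_congr rfl fun j _ => ?_
  rw [Finset.mul_sum, Finset.sum_mul]
  refine Finset.sum_congr rfl fun p _ => ?_
  rw [StarMul.star_mul]
  simp [mul_assoc]

lemma trace_conjT_sub_left (X Y Z : Matrix (Fin n) (Fin m) ℍ[ℝ]) :
    Matrix.trace ((X - Y)ᴴ * Z) = Matrix.trace (Xᴴ * Z) - Matrix.trace (Yᴴ * Z) := by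
  rw [Matrix.conjTranspose_sub, Matrix.sub_mul, Matrix.trace_sub]

lemma trace_conjT_star (X Y : Matrix (Fin n) (Fin m) ℍ[ℝ]) :
    Matrix.trace (Yᴴ * X) = star (Matrix.trace (Xᴴ * Y)) := by
  have : (Xᴴ * Y)ᴴ = Yᴴ * X := by rw [Matrix.conjTranspose_mul, Matrix.conjTranspose_conjTranspose]
  rw [← this, Matrix.trace_conjTranspose]

lemma trace_conjT_self (X : Matrix (Fin n) (Fin m) ℍ[ℝ]) :
    Matrix.trace (Xᴴ * X) = ((∑ j, ∑ p, normSq (X p j) : ℝ) : ℍ[ℝ]) := by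
  simp only [Matrix.trace, Matrix.diag, Matrix.mul_apply, Matrix.conjTranspose_apply,
    star_mul_self]
  have hcast : ∀ {ι : Type} [Fintype ι] (g : ι → ℝ),
      ((∑ i, g i : ℝ) : ℍ[ℝ]) = ∑ i, ((g i : ℝ) : ℍ[ℝ]) := fun g => map_sum (algebraMap ℝ ℍ[ℝ]) g _
  simp only [hcast]

lemma qnorm_sq (X : Matrix (Fin n) (Fin m) ℍ[ℝ]) :
    ((qnorm X)^2 : ℝ) = (∑ j, ∑ p, normSq (X p j) : ℝ) := by
  rw [qnorm, trace_conjT_self, Quaternion.re_coe, Real.sq_sqrt]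
  refine Finset.sum_nonneg fun j _ => Finset.sum_nonneg fun p _ => ?_
  rw [normSq_eq_norm_mul_self]
  exact mul_self_nonneg _


lemma trace_conjT_qsmul_right (X Y : Matrix (Fin n) (Fin m) ℍ[ℝ]) (a : ℍ[ℝ]) :
    Matrix.trace (Xᴴ * qsmul Y a) = Matrix.trace (Xᴴ * Y) * a := by
  have := trace_conjT_qsmul_qsmul X Y 1 a
  rw [qsmul_one] at this
  simpa using this

lemma trace_conjT_sub_right (X Y Z : Matrix (Fin n) (Fin m) ℍ[ℝ]) :
    Matrix.trace (Xᴴ * (Y - Z)) = Matrix.trace (Xᴴ * Y) - Matrix.trace (Xᴴ * Z) := by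
  rw [Matrix.mul_sub, Matrix.trace_sub]

lemma trace_conjT_sum_right {ι : Type*} (s : Finset ι) (X : Matrix (Fin n) (Fin m) ℍ[ℝ])
    (f : ι → Matrix (Fin n) (Fin m) ℍ[ℝ]) :
    Matrix.trace (Xᴴ * ∑ i ∈ s, f i) = ∑ i ∈ s, Matrix.trace (Xᴴ * f i) := by
  rw [Matrix.mul_sum, Matrix.trace_sum]

lemma trace_conjT_self' (X : Matrix (Fin n) (Fin m) ℍ[ℝ]) :
    Matrix.trace (Xᴴ * X) = (((qnorm X)^2 : ℝ) : ℍ[ℝ]) := by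
  rw [trace_conjT_self, qnorm_sq]

lemma arnoldi_ortho {A : Matrix (Fin n) (Fin n) ℍ[ℝ]}
    {V : ℕ → Matrix (Fin n) (Fin m) ℍ[ℝ]} {h : ℕ → ℕ → ℍ[ℝ]}
    (hA : ArnoldiData n m k A V h) :
    ∀ i ∈ Finset.Icc 1 (k+1), ∀ j ∈ Finset.Icc 1 (k+1),
      Matrix.trace ((V i)ᴴ * V j) = if i = j then 1 else 0 := by
  suffices key : ∀ s, s ≤ k + 1 → ∀ i ∈ Finset.Icc 1 s, ∀ j ∈ Finset.Icc 1 s,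
      Matrix.trace ((V i)ᴴ * V j) = if i = j then 1 else 0 from key (k+1) le_rfl
  intro s
  induction s with
  | zero => intro _ i hi; simp at hi
  | succ s ih =>
    intro hs i hi j hj
    rcases Nat.eq_zero_or_pos s with rfl | hspos
    · -- s = 0 : i = j = 1
      simp only [Finset.mem_Icc] at hi hj
      obtain rfl : i = 1 := le_antisymm hi.2 hi.1
      obtain rfl : j = 1 := le_antisymm hj.2 hj.1
      simp only [if_pos rfl]
      rw [trace_conjT_self', hA.normV1]
      norm_num
    · -- s ≥ 1, so s ∈ Icc 1 k
      have hsk : s ∈ Finset.Icc 1 k := Finset.mem_Icc.2 ⟨hspos, Nat.lt_succ_iff.mp hs⟩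
      have ih' := ih (le_of_lt hs)
      set W := A * V s - ∑ l ∈ Finset.Icc 1 s, qsmul (V l) (h l s) with hW
      have hVs1 : V (s+1) = qsmul W (h (s+1) s)⁻¹ := hA.vdef s hsk
      -- cross term : for i ∈ [1,s], trace((V i)ᴴ * V (s+1)) = 0
      have cross : ∀ i ∈ Finset.Icc 1 s, Matrix.trace ((V i)ᴴ * V (s+1)) = 0 := by
        intro i hi
        rw [hVs1, trace_conjT_qsmul_right]
        have hVW : Matrix.trace ((V i)ᴴ * W) = 0 := by
          rw [hW, trace_conjT_sub_right, trace_conjT_sum_right]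
          have hterm : ∀ l ∈ Finset.Icc 1 s,
              Matrix.trace ((V i)ᴴ * qsmul (V l) (h l s)) =
                (if i = l then 1 else 0) * h l s := by
            intro l hl
            rw [trace_conjT_qsmul_right, ih' i hi l hl]
          rw [Finset.sum_congr rfl hterm]
          have : ∑ l ∈ Finset.Icc 1 s, (if i = l then 1 else 0 : ℍ[ℝ]) * h l s = h i s := by
            rw [Finset.sum_eq_single i]
            · simp
            · intro l _ hne; simp [Ne.symm hne]
            · intro hni; exact absurd hi hni
          rw [this, ← hA.hdef s hsk i hi]
          exact sub_self _
        rw [hVW, zero_mul]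
      -- self term : trace((V (s+1))ᴴ * V (s+1)) = 1
      have selfterm : Matrix.trace ((V (s+1))ᴴ * V (s+1)) = 1 := by
        rw [hVs1, trace_conjT_qsmul_qsmul, trace_conjT_self']
        have hval : h (s+1) s = ((qnorm W : ℝ) : ℍ[ℝ]) := hA.hsub s hsk
        have hne : (qnorm W : ℝ) ≠ 0 := by
          intro h0
          apply hA.hsub_ne s hsk
          rw [hval, h0, Quaternion.coe_zero]
        rw [hval, ← Quaternion.coe_inv, star_coe, ← Quaternion.coe_mul, ← Quaternion.coe_mul]
        rw [show (qnorm W)⁻¹ * (qnorm W)^2 * (qnorm W)⁻¹ = 1 by field_simp]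
        exact Quaternion.coe_one
      -- now case split
      simp only [Finset.mem_Icc] at hi hj
      rcases Nat.lt_succ_iff_lt_or_eq.mp (Nat.lt_succ_of_le hi.2) with hi' | rfl
      · rcases Nat.lt_succ_iff_lt_or_eq.mp (Nat.lt_succ_of_le hj.2) with hj' | rfl
        · exact ih' i (Finset.mem_Icc.2 ⟨hi.1, Nat.lt_succ_iff.mp hi'⟩)
            j (Finset.mem_Icc.2 ⟨hj.1, Nat.lt_succ_iff.mp hj'⟩)
        · rw [cross i (Finset.mem_Icc.2 ⟨hi.1, Nat.lt_succ_iff.mp hi'⟩),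
            if_neg (by omega)]
      · rcases Nat.lt_succ_iff_lt_or_eq.mp (Nat.lt_succ_of_le hj.2) with hj' | rfl
        · rw [trace_conjT_star, cross j (Finset.mem_Icc.2 ⟨hj.1, Nat.lt_succ_iff.mp hj'⟩),
            star_zero, if_neg (by omega)]
        · rw [selfterm, if_pos rfl]

lemma qsmul_zero_scalar {n m : ℕ} (X : Matrix (Fin n) (Fin m) ℍ[ℝ]) : qsmul X 0 = 0 := by
  funext i j; simp [qsmul]

lemma arnoldi_rel {n m k : ℕ} {A : Matrix (Fin n) (Fin n) ℍ[ℝ]}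
    {V : ℕ → Matrix (Fin n) (Fin m) ℍ[ℝ]} {h : ℕ → ℕ → ℍ[ℝ]}
    (hA : ArnoldiData n m k A V h) :
    ∀ j ∈ Finset.Icc 1 k, A * V j = ∑ i ∈ Finset.Icc 1 (j+1), qsmul (V i) (h i j) := by
  intro j hj
  rw [Finset.sum_Icc_succ_top (by omega : 1 ≤ j+1), hA.vdef j hj, qsmul_qsmul,
    inv_mul_cancel₀ (hA.hsub_ne j hj), qsmul_one]
  abel
lemma quat_coe_sum {ι : Type*} (s : Finset ι) (g : ι → ℝ) :
    ((∑ i ∈ s, g i : ℝ) : ℍ[ℝ]) = ∑ i ∈ s, ((g i : ℝ) : ℍ[ℝ]) :=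
  map_sum (algebraMap ℝ ℍ[ℝ]) g s


/-- Residual norm of the Gl-QGMRES iterate: with `R₀ = B − A X₀`,
`β = ‖R₀‖ > 0`, `V₁ = R₀ β⁻¹`, the Arnoldi hypotheses through step `k`, the extended
Hessenberg matrix `H̄_k ∈ ℍ^{(k+1)×k}`, a unitary `Q` with `Q H̄_k = [R̃; 0]`, `R̃` upper
triangular with nonzero diagonal, and `q` the first column of `Q`: if `R̃ y = β q(1:k)`
then `X_k = X₀ + Σ_j V_j y_j` satisfies `‖B − A X_k‖ = β |q_{k+1}|`, and this value is the
minimum of the residual norm over the affine Krylov subspace. -/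
theorem glqgmres_residual_norm (n m k : ℕ)
    (A : Matrix (Fin n) (Fin n) ℍ[ℝ]) (B X₀ : Matrix (Fin n) (Fin m) ℍ[ℝ])
    (R₀ : Matrix (Fin n) (Fin m) ℍ[ℝ]) (hR₀ : R₀ = B - A * X₀)
    (β : ℝ) (hβ : β = qnorm R₀) (hβpos : 0 < β)
    (V : ℕ → Matrix (Fin n) (Fin m) ℍ[ℝ]) (hV1 : V 1 = qsmul R₀ ((β : ℍ[ℝ])⁻¹))
    (h : ℕ → ℕ → ℍ[ℝ]) (hA : ArnoldiData n m k A V h)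
    (Hbar : Matrix (Fin (k + 1)) (Fin k) ℍ[ℝ])
    (hHbar : ∀ (i : Fin (k + 1)) (j : Fin k),
      Hbar i j = if (j : ℕ) + 1 < (i : ℕ) then 0 else h ((i : ℕ) + 1) ((j : ℕ) + 1))
    (Q : Matrix (Fin (k + 1)) (Fin (k + 1)) ℍ[ℝ]) (hQ : Qᴴ * Q = 1)
    (Rt : Matrix (Fin k) (Fin k) ℍ[ℝ])
    (hQR : ∀ (i : Fin k) (j : Fin k), (Q * Hbar) (Fin.castSucc i) j = Rt i j)
    (hQR0 : ∀ j : Fin k, (Q * Hbar) (Fin.last k) j = 0)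
    (hRtTri : ∀ i j : Fin k, (j : ℕ) < (i : ℕ) → Rt i j = 0)
    (hRtDiag : ∀ i : Fin k, Rt i i ≠ 0)
    (y : Fin k → ℍ[ℝ])
    (hy : ∀ i : Fin k,
      ∑ j : Fin k, Rt i j * y j = (β : ℍ[ℝ]) * Q (Fin.castSucc i) 0)
    (Xk : Matrix (Fin n) (Fin m) ℍ[ℝ])
    (hXk : Xk = X₀ + ∑ j : Fin k, qsmul (V ((j : ℕ) + 1)) (y j)) :
    qnorm (B - A * Xk) = β * ‖Q (Fin.last k) 0‖ ∧
    ∀ z : Fin k → ℍ[ℝ],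
      qnorm (B - A * Xk) ≤
        qnorm (B - A * (X₀ + ∑ j : Fin k, qsmul (V ((j : ℕ) + 1)) (z j))) := by
  have hβne : (β : ℝ) ≠ 0 := ne_of_gt hβpos
  -- step 1 : A * V (j+1) in terms of Hbar
  have hAV : ∀ j : Fin k,
      A * V ((j:ℕ)+1) = ∑ i : Fin (k+1), qsmul (V ((i:ℕ)+1)) (Hbar i j) := by
    intro j
    have hjm : (j:ℕ)+1 ∈ Finset.Icc 1 k := Finset.mem_Icc.2 ⟨by omega, by omega⟩
    rw [arnoldi_rel hA _ hjm]
    have step1 : (∑ i : Fin (k+1), qsmul (V ((i:ℕ)+1)) (Hbar i j)) =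
        ∑ t ∈ Finset.range (k+1),
          (if (j:ℕ)+1 < t then 0 else qsmul (V (t+1)) (h (t+1) ((j:ℕ)+1))) := by
      rw [← Fin.sum_univ_eq_sum_range]
      refine Finset.sum_congr rfl fun i _ => ?_
      rw [hHbar]
      split
      · rw [qsmul_zero_scalar]
      · rfl
    rw [step1, ← Finset.sum_subset (Finset.range_subset_range.2 (by omega : (j:ℕ)+2 ≤ k+1))
        (fun t ht hnt => if_pos (by simp only [Finset.mem_range] at ht hnt; omega))]
    rw [← Finset.Ico_add_one_right_eq_Icc, Finset.sum_Ico_eq_sum_range]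
    refine Finset.sum_congr (by congr 1) fun t ht => ?_
    rw [if_neg (by simp only [Finset.mem_range] at ht; omega)]
    rw [Nat.add_comm 1 t]
  -- the coefficient vector
  set c : (Fin k → ℍ[ℝ]) → Fin (k+1) → ℍ[ℝ] := fun z i =>
    (β : ℍ[ℝ]) * (if i = 0 then 1 else 0) - ∑ j : Fin k, Hbar i j * z j with hc
  -- step 2 : residual expression
  have hR0V : qsmul (V 1) ((β : ℝ) : ℍ[ℝ]) = R₀ := by
    rw [hV1, qsmul_qsmul, ← Quaternion.coe_inv, ← Quaternion.coe_mul,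
      inv_mul_cancel₀ hβne, Quaternion.coe_one, qsmul_one]
  have hres : ∀ z : Fin k → ℍ[ℝ],
      B - A * (X₀ + ∑ j : Fin k, qsmul (V ((j:ℕ)+1)) (z j)) =
        ∑ i : Fin (k+1), qsmul (V ((i:ℕ)+1)) (c z i) := by
    intro z
    calc B - A * (X₀ + ∑ j : Fin k, qsmul (V ((j:ℕ)+1)) (z j))
        = R₀ - ∑ j : Fin k, qsmul (A * V ((j:ℕ)+1)) (z j) := by
          rw [hR₀, Matrix.mul_add, Matrix.mul_sum]
          simp only [mul_qsmul]
          abel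
      _ = qsmul (V 1) ((β : ℝ) : ℍ[ℝ]) -
          ∑ j : Fin k, ∑ i : Fin (k+1), qsmul (V ((i:ℕ)+1)) (Hbar i j * z j) := by
          rw [hR0V]
          congr 1
          refine Finset.sum_congr rfl fun j _ => ?_
          rw [hAV j, sum_qsmul]
          refine Finset.sum_congr rfl fun i _ => ?_
          rw [qsmul_qsmul]
      _ = ∑ i : Fin (k+1), qsmul (V ((i:ℕ)+1)) (c z i) := by
          rw [Finset.sum_comm]
          have expand : ∀ i : Fin (k+1), qsmul (V ((i:ℕ)+1)) (c z i) =
              qsmul (V ((i:ℕ)+1)) ((β:ℍ[ℝ]) * (if i = 0 then 1 else 0)) -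
                ∑ j : Fin k, qsmul (V ((i:ℕ)+1)) (Hbar i j * z j) := by
            intro i
            rw [hc, qsmul_sub_scalar, qsmul_sum_scalar]
          rw [Finset.sum_congr rfl fun i _ => expand i, Finset.sum_sub_distrib]
          congr 1
          rw [Finset.sum_eq_single (0 : Fin (k+1))
            (fun i _ hne => by rw [if_neg hne, mul_zero, qsmul_zero_scalar])
            (fun habs => absurd (Finset.mem_univ 0) habs)]
          simp
  -- step 3 : norm of such combinations
  have hnorm : ∀ a : Fin (k+1) → ℍ[ℝ],
      qnorm (∑ i : Fin (k+1), qsmul (V ((i:ℕ)+1)) (a i)) =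
        Real.sqrt (∑ i, normSq (a i)) := by
    intro a
    have ortho := arnoldi_ortho hA
    have inner : ∀ i i' : Fin (k+1),
        Matrix.trace ((qsmul (V ((i:ℕ)+1)) (a i))ᴴ * qsmul (V ((i':ℕ)+1)) (a i')) =
          if i = i' then ((normSq (a i) : ℝ) : ℍ[ℝ]) else 0 := by
      intro i i'
      rw [trace_conjT_qsmul_qsmul, ortho ((i:ℕ)+1) (Finset.mem_Icc.2 ⟨by omega, by omega⟩)
        ((i':ℕ)+1) (Finset.mem_Icc.2 ⟨by omega, by omega⟩)]
      by_cases hii : i = i'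
      · subst hii
        rw [if_pos rfl, if_pos rfl, mul_one, star_mul_self]
      · rw [if_neg (fun hcon => hii (Fin.ext (by omega))), if_neg hii, mul_zero, zero_mul]
    have htr : Matrix.trace ((∑ i : Fin (k+1), qsmul (V ((i:ℕ)+1)) (a i))ᴴ *
        (∑ i : Fin (k+1), qsmul (V ((i:ℕ)+1)) (a i))) = ((∑ i, normSq (a i) : ℝ) : ℍ[ℝ]) := by
      rw [Matrix.conjTranspose_sum, Matrix.sum_mul, Matrix.trace_sum]
      simp only [Matrix.mul_sum, Matrix.trace_sum, inner]
      simp only [Finset.sum_ite_eq, Finset.mem_univ, if_true]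
      rw [quat_coe_sum]
    rw [qnorm, htr, Quaternion.re_coe]
  -- step 4 : unitary invariance of the coefficient sum
  have hQinv : ∀ a : Fin (k+1) → ℍ[ℝ],
      (∑ i, normSq (a i)) = ∑ i, normSq (∑ j, Q i j * a j) := by
    intro a
    have key : ∀ j l : Fin (k+1),
        (∑ i, star (Q i j) * Q i l) = if j = l then 1 else 0 := by
      intro j l
      have h1 : (Qᴴ * Q) j l = (1 : Matrix (Fin (k+1)) (Fin (k+1)) ℍ[ℝ]) j l := by rw [hQ]
      rw [Matrix.mul_apply, Matrix.one_apply] at h1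
      simpa [Matrix.conjTranspose_apply] using h1
    have expand : ∀ i : Fin (k+1), star (∑ j, Q i j * a j) * (∑ j, Q i j * a j) =
        ∑ j : Fin (k+1), ∑ l : Fin (k+1), star (a j) * (star (Q i j) * Q i l) * a l := by
      intro i
      rw [star_sum, Finset.sum_mul_sum]
      refine Finset.sum_congr rfl fun j _ => Finset.sum_congr rfl fun l _ => ?_
      rw [StarMul.star_mul]
      simp [mul_assoc]
    have quat : (∑ i : Fin (k+1), star (∑ j, Q i j * a j) * (∑ j, Q i j * a j)) =
        ∑ j : Fin (k+1), star (a j) * a j := by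
      rw [Finset.sum_congr rfl fun i _ => expand i, Finset.sum_comm]
      refine Finset.sum_congr rfl fun j _ => ?_
      rw [Finset.sum_comm]
      have swap : ∀ l : Fin (k+1), (∑ i, star (a j) * (star (Q i j) * Q i l) * a l) =
          star (a j) * (if j = l then 1 else 0) * a l := by
        intro l
        rw [← key j l, Finset.mul_sum, Finset.sum_mul]
      rw [Finset.sum_congr rfl fun l _ => swap l]
      rw [Finset.sum_eq_single j
        (fun l _ hne => by rw [if_neg (fun hh => hne hh.symm), mul_zero, zero_mul])
        (fun habs => absurd (Finset.mem_univ j) habs)]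
      rw [if_pos rfl, mul_one]
    have hcoe : ((∑ i, normSq (∑ j, Q i j * a j) : ℝ) : ℍ[ℝ]) =
        ((∑ j, normSq (a j) : ℝ) : ℍ[ℝ]) := by
      rw [quat_coe_sum, quat_coe_sum]
      simpa only [star_mul_self] using quat
    exact (Quaternion.coe_injective hcoe).symm
  -- step 5 : the rotated coefficients
  have hQc : ∀ (z : Fin k → ℍ[ℝ]) (i : Fin (k+1)),
      (∑ j, Q i j * c z j) =
        (β : ℍ[ℝ]) * Q i 0 - ∑ l : Fin k, (Q * Hbar) i l * z l := by
    intro z i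
    simp only [hc]
    rw [Finset.sum_congr rfl (fun j _ => mul_sub (Q i j) _ _), Finset.sum_sub_distrib]
    congr 1
    · rw [Finset.sum_eq_single (0 : Fin (k+1))
        (fun j _ hne => by rw [if_neg hne, mul_zero, mul_zero])
        (fun habs => absurd (Finset.mem_univ 0) habs)]
      rw [if_pos rfl, mul_one, ← Quaternion.coe_commutes]
    · rw [Finset.sum_congr rfl fun j _ => Finset.mul_sum _ _ _, Finset.sum_comm]
      refine Finset.sum_congr rfl fun l _ => ?_
      rw [Matrix.mul_apply, Finset.sum_mul]
      exact Finset.sum_congr rfl fun j _ => (mul_assoc _ _ _).symm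
  have hQclast : ∀ z : Fin k → ℍ[ℝ],
      (∑ j, Q (Fin.last k) j * c z j) = (β : ℍ[ℝ]) * Q (Fin.last k) 0 := by
    intro z
    rw [hQc]
    simp [hQR0]
  have hQcy : ∀ i : Fin k, (∑ j, Q (Fin.castSucc i) j * c y j) = 0 := by
    intro i
    rw [hQc]
    simp only [hQR]
    rw [hy i, sub_self]
  -- residual norms as sqrt of rotated sums
  have hval : ∀ z : Fin k → ℍ[ℝ],
      qnorm (B - A * (X₀ + ∑ j : Fin k, qsmul (V ((j:ℕ)+1)) (z j))) =
        Real.sqrt (∑ i, normSq (∑ j, Q i j * c z j)) := by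
    intro z
    rw [hres z, hnorm, hQinv]
  have hlastval : normSq ((β : ℍ[ℝ]) * Q (Fin.last k) 0) =
      β^2 * normSq (Q (Fin.last k) 0) := by
    rw [_root_.map_mul normSq, normSq_coe]
  have hmain : qnorm (B - A * Xk) = β * ‖Q (Fin.last k) 0‖ := by
    rw [hXk, hval y]
    rw [Fin.sum_univ_castSucc]
    simp only [hQcy, hQclast y, map_zero, Finset.sum_const_zero, zero_add]
    rw [hlastval, normSq_eq_norm_mul_self, Real.sqrt_mul (sq_nonneg β),
      Real.sqrt_sq hβpos.le, Real.sqrt_mul_self (norm_nonneg _)]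
  refine ⟨hmain, fun z => ?_⟩
  rw [hmain, hval z]
  have hnn : ∀ q : ℍ[ℝ], 0 ≤ normSq q := fun q => by
    rw [normSq_eq_norm_mul_self]; exact mul_self_nonneg _
  have hle : β^2 * normSq (Q (Fin.last k) 0) ≤ ∑ i, normSq (∑ j, Q i j * c z j) := by
    rw [← hlastval, ← hQclast z]
    exact Finset.single_le_sum (f := fun i => normSq (∑ j, Q i j * c z j))
      (fun i _ => hnn _) (Finset.mem_univ (Fin.last k))
  calc β * ‖Q (Fin.last k) 0‖ = Real.sqrt (β^2 * normSq (Q (Fin.last k) 0)) := by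
        rw [normSq_eq_norm_mul_self, Real.sqrt_mul (sq_nonneg β),
          Real.sqrt_sq hβpos.le, Real.sqrt_mul_self (norm_nonneg _)]
    _ ≤ _ := Real.sqrt_le_sqrt hle
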